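/- Let f : ℝ² → ℝ be continuous, continuously differentiable in its first argument when that argument is nonzero, and satisfy f(x,y) = f(x,-y) for all x,y. Fix β > 0 and a closed interval P = [-α_l, -α_s] with 0 < α_s ≤ α_l. Suppose max_{x ∈ -P} ∂f/∂x(x,-β) < -max_{x ∈ P} ∂f/∂x(x,-β). Then there exists no pair (x₁*, x₂*) ∈ ℝ² with x₁* - 0 ∈ P and x₂* - x₁* ∈ P satisfying the stationarity condition ∂f/∂x(x₁*, -β) + ∂f/∂x(x₁* - x₂*, β) = 0. -/
import Mathlib


open Set

/-- Theorem 1 of the paper: nonexistence of a Nash equilibrium of interest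
for three agents (leader 0 and followers 1, 2). -/
theorem no_NE_three_agents
    (f : ℝ → ℝ → ℝ) (β αs αl : ℝ)
    (hβ : 0 < β) (hαs : 0 < αs) (hα : αs ≤ αl)
    (hcont : Continuous (fun p : ℝ × ℝ => f p.1 p.2))
    (hC1 : ContDiffOn ℝ 1 (fun p : ℝ × ℝ => f p.1 p.2) {p : ℝ × ℝ | p.1 ≠ 0})
    (hsym : ∀ x y : ℝ, f x y = f x (-y))
    (hcond : sSup ((fun x => deriv (fun t => f t (-β)) x) '' Icc αs αl)
        < - sSup ((fun x => deriv (fun t => f t (-β)) x) '' Icc (-αl) (-αs))) :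
    ¬ ∃ x₁ x₂ : ℝ, x₁ - 0 ∈ Icc (-αl) (-αs) ∧ x₂ - x₁ ∈ Icc (-αl) (-αs) ∧
      deriv (fun t => f t (-β)) x₁ + deriv (fun t => f t β) (x₁ - x₂) = 0 := by
  rintro ⟨x₁, x₂, h₁, h₂, hstat⟩
  have hfun : (fun t => f t β) = fun t => f t (-β) := funext fun x => by rw [hsym x β]
  set g : ℝ → ℝ := deriv (fun t => f t (-β)) with hg
  -- f(·, -β) is C¹ away from 0
  have hF : ContDiffOn ℝ 1 (fun t : ℝ => f t (-β)) {t : ℝ | t ≠ 0} := by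
    have hmap : MapsTo (fun t : ℝ => (t, -β)) {t : ℝ | t ≠ 0} {p : ℝ × ℝ | p.1 ≠ 0} :=
      fun t ht => ht
    have : ContDiffOn ℝ 1 (fun t : ℝ => (t, -β)) {t : ℝ | t ≠ 0} :=
      (contDiff_id.prodMk contDiff_const).contDiffOn
    exact hC1.comp this hmap
  have hopen : IsOpen {t : ℝ | t ≠ 0} := isOpen_ne
  have hgcont : ContinuousOn g {t : ℝ | t ≠ 0} :=
    hF.continuousOn_deriv_of_isOpen hopen le_rfl
  have hsub1 : Icc (-αl) (-αs) ⊆ {t : ℝ | t ≠ 0} := by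
    intro t ht
    have : t ≤ -αs := ht.2
    have : t < 0 := lt_of_le_of_lt this (by linarith)
    exact ne_of_lt this
  have hsub2 : Icc αs αl ⊆ {t : ℝ | t ≠ 0} := by
    intro t ht
    have : αs ≤ t := ht.1
    exact ne_of_gt (lt_of_lt_of_le hαs this)
  have hbdd1 : BddAbove (g '' Icc (-αl) (-αs)) :=
    (isCompact_Icc.image_of_continuousOn (hgcont.mono hsub1)).bddAbove
  have hbdd2 : BddAbove (g '' Icc αs αl) :=
    (isCompact_Icc.image_of_continuousOn (hgcont.mono hsub2)).bddAbove
  have hx₁ : x₁ ∈ Icc (-αl) (-αs) := by simpa using h₁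
  have hx₁₂ : x₁ - x₂ ∈ Icc αs αl := by
    constructor <;> [linarith [h₂.2]; linarith [h₂.1]]
  have hle1 : g x₁ ≤ sSup (g '' Icc (-αl) (-αs)) :=
    le_csSup hbdd1 (mem_image_of_mem g hx₁)
  have hle2 : g (x₁ - x₂) ≤ sSup (g '' Icc αs αl) :=
    le_csSup hbdd2 (mem_image_of_mem g hx₁₂)
  rw [hfun] at hstat
  simp only [← hg] at hstat hcond
  linarith
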